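/- arXiv:0704.2328 — 7 statements merged into one kernel-verified Lean document; each statement's English description precedes it below -/
import Mathlib

section
/- Let X be a connected and locally arcwise connected metric space and let A, B, C ⊆ X be closed and nonempty sets with A ∩ B = ∅. Then C cuts the arcs between A and B if and only if there exists a continuous function f : X → ℝ such that f(x) ≤ 0 for all x ∈ A, f(x) ≥ 0 for all x ∈ B, and C = {x ∈ X : f(x) = 0}. -/
/-- `C` cuts the arcs between `A` and `B` in the space `X`: every path in `X`
whose range meets both `A` and `B` has range meeting `C`. -/
def CutsArcs {X : Type*} [TopologicalSpace X] (A B C : Set X) : Prop :=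
  ∀ γ : C(unitInterval, X),
    (Set.range γ ∩ A).Nonempty → (Set.range γ ∩ B).Nonempty →
    (Set.range γ ∩ C).Nonempty

theorem stmt0 {X : Type*} [MetricSpace X] [ConnectedSpace X] [LocallyPathConnectedSpace X]
    (A B C : Set X) (hA : IsClosed A) (hB : IsClosed B) (hC : IsClosed C)
    (hAne : A.Nonempty) (hBne : B.Nonempty) (hCne : C.Nonempty)
    (hAB : A ∩ B = ∅) :
    CutsArcs A B C ↔
      ∃ f : X → ℝ, Continuous f ∧ (∀ x ∈ A, f x ≤ 0) ∧ (∀ x ∈ B, 0 ≤ f x) ∧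
        C = {x : X | f x = 0} := by
  classical
  constructor
  · intro h
    set P : Set X := {x | ∃ a ∈ A, JoinedIn Cᶜ a x} with hPdef
    have hPU : P ⊆ Cᶜ := fun x ⟨a, _, hj⟩ => hj.target_mem
    have hUopen : IsOpen (Cᶜ) := hC.isOpen_compl
    -- P is open
    have hPopen : IsOpen P := by
      rw [isOpen_iff_forall_mem_open]
      intro x hx
      refine ⟨pathComponentIn Cᶜ x, ?_, hUopen.pathComponentIn x,
        mem_pathComponentIn_self (hPU hx)⟩
      rintro z hz
      obtain ⟨a, haA, hax⟩ := hx
      exact ⟨a, haA, hax.trans hz⟩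
    -- the complement part in U is open
    have hQopen : IsOpen (Cᶜ \ P) := by
      rw [isOpen_iff_forall_mem_open]
      intro x ⟨hxU, hxP⟩
      refine ⟨pathComponentIn Cᶜ x, ?_, hUopen.pathComponentIn x,
        mem_pathComponentIn_self hxU⟩
      rintro z hz
      refine ⟨hz.target_mem, fun ⟨a, haA, haz⟩ => hxP ⟨a, haA, haz.trans hz.symm⟩⟩
    set f : X → ℝ := fun x =>
      if x ∈ P then -(Metric.infDist x C) else Metric.infDist x C with hfdef
    have hf0 : ∀ x ∈ C, f x = 0 := by
      intro x hx
      simp only [hfdef]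
      rw [Metric.infDist_zero_of_mem hx]
      split <;> simp
    have hcont : Continuous f := by
      rw [continuous_iff_continuousAt]
      intro x
      by_cases hxC : x ∈ C
      · have : f x = 0 := hf0 x hxC
        rw [ContinuousAt, this]
        have hd : Filter.Tendsto (fun y => Metric.infDist y C) (nhds x) (nhds 0) := by
          have := (Metric.continuous_infDist_pt C).continuousAt (x := x)
          rwa [ContinuousAt, Metric.infDist_zero_of_mem hxC] at this
        refine squeeze_zero_norm (fun y => ?_) hd
        simp only [hfdef]
        split <;> simp [abs_of_nonneg Metric.infDist_nonneg]
      · by_cases hxP : x ∈ P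
        · have heq : f =ᶠ[nhds x] fun y => -(Metric.infDist y C) :=
            Filter.eventually_of_mem (hPopen.mem_nhds hxP) (fun y hy => if_pos hy)
          exact ((Metric.continuous_infDist_pt C).neg.continuousAt).congr heq.symm
        · have heq : f =ᶠ[nhds x] fun y => Metric.infDist y C :=
            Filter.eventually_of_mem (hQopen.mem_nhds ⟨hxC, hxP⟩)
              (fun y hy => if_neg hy.2)
          exact ((Metric.continuous_infDist_pt C).continuousAt).congr heq.symm
    refine ⟨f, hcont, ?_, ?_, ?_⟩
    · intro x hxA
      by_cases hxC : x ∈ C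
      · exact le_of_eq (hf0 x hxC)
      · have hxP : x ∈ P := ⟨x, hxA, JoinedIn.refl hxC⟩
        simp only [hfdef, if_pos hxP]
        exact neg_nonpos.mpr Metric.infDist_nonneg
    · intro x hxB
      by_cases hxC : x ∈ C
      · exact ge_of_eq (hf0 x hxC)
      · have hxP : x ∉ P := by
          rintro ⟨a, haA, γ, hγ⟩
          obtain ⟨c, ⟨t, ht⟩, hcC⟩ := h γ.toContinuousMap
            ⟨a, ⟨0, by simp⟩, haA⟩ ⟨x, ⟨1, by simp⟩, hxB⟩
          exact hγ t (by rw [show γ t = c from ht]; exact hcC)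
        simp only [hfdef, if_neg hxP]
        exact Metric.infDist_nonneg
    · ext x
      simp only [Set.mem_setOf_eq]
      constructor
      · intro hx
        exact hf0 x hx
      · intro hx
        simp only [hfdef] at hx
        have : Metric.infDist x C = 0 := by
          by_cases hxP : x ∈ P
          · rw [if_pos hxP] at hx; linarith
          · rwa [if_neg hxP] at hx
        exact (hC.mem_iff_infDist_zero hCne).mpr this
  · rintro ⟨f, hf, hfA, hfB, hfC⟩ γ ⟨a, ⟨ta, hta⟩, haA⟩ ⟨b, ⟨tb, htb⟩, hbB⟩
    have h0 : (0 : ℝ) ∈ Set.Icc (f (γ ta)) (f (γ tb)) := by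
      constructor
      · rw [hta]; exact hfA a haA
      · rw [htb]; exact hfB b hbB
    obtain ⟨t, ht⟩ := intermediate_value_univ ta tb (hf.comp γ.continuous) h0
    exact ⟨γ t, ⟨t, rfl⟩, by rw [hfC]; exact ht⟩
end

section
/- Let X be a connected and locally arcwise connected metric space and let A, B ⊆ X be closed and nonempty sets with A ∩ B = ∅. Then the sides S(A) and S(B) are closed subsets of X and S(A) ∩ S(B) = ∅. -/
/-- The side of `A` in `X` (relative to `B`): the set of points `x` such that every
path starting at `x` and ending in `B` has range meeting `A`. -/
def sideOf {X : Type*} [TopologicalSpace X] (A B : Set X) : Set X :=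
  {x : X | ∀ γ : C(unitInterval, X), γ 0 = x → γ 1 ∈ B →
    (Set.range γ ∩ A).Nonempty}

/-- Truncation map `t ↦ min t c` on the unit interval, as a continuous map. -/
def trunc (c : unitInterval) : C(unitInterval, unitInterval) :=
  ⟨fun t => ⟨min t.1 c.1, ⟨le_min t.2.1 c.2.1, min_le_of_left_le t.2.2⟩⟩,
    Continuous.subtype_mk (continuous_subtype_val.min continuous_const) _⟩

lemma isClosed_sideOf {X : Type*} [TopologicalSpace X] [LocallyPathConnectedSpace X]
    {A : Set X} (B : Set X) (hA : IsClosed A) : IsClosed (sideOf A B) := by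
  rw [← isOpen_compl_iff]
  rw [isOpen_iff_forall_mem_open]
  intro x hx
  simp only [Set.mem_compl_iff, sideOf, Set.mem_setOf_eq, not_forall] at hx
  obtain ⟨γ, h0, h1, hne⟩ := hx
  rw [Set.not_nonempty_iff_eq_empty] at hne
  have hxA : x ∉ A := by
    intro hxA
    have : x ∈ Set.range γ ∩ A := ⟨⟨0, h0⟩, hxA⟩
    simp [hne] at this
  -- get an open path-connected neighborhood of x inside Aᶜ
  obtain ⟨U, ⟨hUopen, hxU, hUpc⟩, hUA⟩ :=
    (isOpen_isPathConnected_basis x).mem_iff.mp (hA.isOpen_compl.mem_nhds hxA)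
  refine ⟨U, ?_, hUopen, hxU⟩
  intro y hyU
  simp only [Set.mem_compl_iff, sideOf, Set.mem_setOf_eq, not_forall]
  obtain ⟨p, hp⟩ := (hUpc.joinedIn y hyU x hxU)
  -- path from y to x inside U, then γ
  have hγ1 : γ 1 ∈ B := h1
  let q : Path x (γ 1) := { toContinuousMap := γ, source' := h0, target' := rfl }
  let r : Path y (γ 1) := p.trans q
  refine ⟨r.toContinuousMap, r.source, by rw [show r.toContinuousMap 1 = γ 1 from r.target]; exact hγ1, ?_⟩
  rw [Set.not_nonempty_iff_eq_empty, Set.eq_empty_iff_forall_notMem]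
  rintro z ⟨⟨t, rfl⟩, hzA'⟩
  have hzA : r t ∈ A := hzA'
  have : r t ∈ Set.range p ∪ Set.range q := by
    rw [← Path.trans_range]; exact ⟨t, rfl⟩
  rcases this with h | h
  · obtain ⟨s, hs⟩ := h
    rw [← hs] at hzA
    exact hUA (hp s) hzA
  · obtain ⟨s, hs⟩ := h
    rw [← hs] at hzA
    have : q s ∈ Set.range γ ∩ A := ⟨⟨s, rfl⟩, hzA⟩
    simp [hne] at this

theorem stmt1 {X : Type*} [MetricSpace X] [ConnectedSpace X] [LocallyPathConnectedSpace X]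
    (A B : Set X) (hA : IsClosed A) (hB : IsClosed B)
    (hAne : A.Nonempty) (hBne : B.Nonempty) (hAB : A ∩ B = ∅) :
    IsClosed (sideOf A B) ∧ IsClosed (sideOf B A) ∧
      sideOf A B ∩ sideOf B A = ∅ := by
  refine ⟨isClosed_sideOf B hA, isClosed_sideOf A hB, ?_⟩
  rw [Set.eq_empty_iff_forall_notMem]
  rintro x ⟨hxA, hxB⟩
  haveI : PathConnectedSpace X := pathConnectedSpace_iff_connectedSpace.mpr ‹_›
  obtain ⟨b, hb⟩ := hBne
  obtain ⟨p⟩ := PathConnectedSpace.joined x b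
  set γ : C(unitInterval, X) := p.toContinuousMap with hγ
  have h0 : γ 0 = x := p.source
  have h1 : γ 1 ∈ B := by rw [show γ 1 = b from p.target]; exact hb
  have disj : ∀ z, z ∈ A → z ∈ B → False := by
    intro z h1 h2
    have : z ∈ A ∩ B := ⟨h1, h2⟩
    simp [hAB] at this
  -- the set of times γ is in A is nonempty closed, take least element
  obtain ⟨t, ht⟩ := hxA γ h0 h1
  obtain ⟨t, rfl⟩ := ht.1
  have hTA : IsClosed (γ ⁻¹' A) := hA.preimage γ.continuous
  obtain ⟨a, haA, haMin⟩ :=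
    hTA.isCompact.exists_isLeast ⟨t, ht.2⟩
  -- the truncated path from x to γ a ∈ A must meet B
  have hc0 : ∀ (c : unitInterval), (γ.comp (trunc c)) 0 = x := by
    intro c
    have : trunc c 0 = 0 := Subtype.ext (by simp [trunc, c.2.1])
    simp only [ContinuousMap.comp_apply, this, h0]
  have hc1 : ∀ (c : unitInterval), (γ.comp (trunc c)) 1 = γ c := by
    intro c
    have : trunc c 1 = c := Subtype.ext (by simp [trunc, c.2.2])
    simp only [ContinuousMap.comp_apply, this]
  obtain ⟨z, hz⟩ := hxB (γ.comp (trunc a)) (hc0 a) (by rw [hc1 a]; exact haA)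
  obtain ⟨u, rfl⟩ := hz.1
  -- s := min u a, γ s ∈ B, s ≤ a
  set s : unitInterval := trunc a u with hs
  have hsB : γ s ∈ B := hz.2
  have hsa : s ≤ a := Subtype.coe_le_coe.mp (min_le_right _ _)
  -- truncated path from x to γ s ∈ B must meet A, at time ≤ s
  obtain ⟨w, hw⟩ := hxA (γ.comp (trunc s)) (hc0 s) (by rw [hc1 s]; exact hsB)
  obtain ⟨v, rfl⟩ := hw.1
  have hvA : γ (trunc s v) ∈ A := hw.2
  have hvs : trunc s v ≤ s := Subtype.coe_le_coe.mp (min_le_right _ _)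
  have hav : a ≤ trunc s v := haMin hvA
  have : a = s := le_antisymm (hav.trans hvs) hsa
  exact disj (γ a) haA (this ▸ hsB)
end

section
/- Let X be a connected and locally arcwise connected metric space and let A, B, C ⊆ X be closed and nonempty sets with A ∩ B = ∅. Then C cuts the arcs between A and B if and only if C cuts the arcs between S(A) and S(B). -/
namespace Stmt2Aux

open Set unitInterval

/-- Affine segment from `s` to `t` inside the unit interval. -/
noncomputable def seg (s t : unitInterval) : C(unitInterval, unitInterval) where
  toFun v := ⟨(1 - v.1) * s.1 + v.1 * t.1, by
    obtain ⟨hv0, hv1⟩ := v.2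
    obtain ⟨hs0, hs1⟩ := s.2
    obtain ⟨ht0, ht1⟩ := t.2
    constructor <;> nlinarith⟩
  continuous_toFun := by
    apply Continuous.subtype_mk
    fun_prop

lemma seg_apply (s t v : unitInterval) :
    (seg s t v : ℝ) = (1 - v.1) * s.1 + v.1 * t.1 := rfl

lemma seg_zero (s t : unitInterval) : seg s t 0 = s := by
  apply Subtype.ext
  rw [seg_apply]
  norm_num

lemma seg_one (s t : unitInterval) : seg s t 1 = t := by
  apply Subtype.ext
  rw [seg_apply]
  norm_num

lemma seg_le {u v : unitInterval} : seg 0 u v ≤ u := by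
  have h := seg_apply 0 u v
  have hv := v.2
  have hu := u.2
  rw [Subtype.mk_le_mk]
  show (seg 0 u v : ℝ) ≤ u.1
  rw [h]
  have : ((0 : unitInterval) : ℝ) = 0 := rfl
  rw [this]
  nlinarith [hv.1, hv.2, hu.1, hu.2]

/-- Restriction (reparametrized) of a continuous map to the segment `[s,t]`. -/
noncomputable def restrict {X : Type*} [TopologicalSpace X] (γ : C(unitInterval, X))
    (s t : unitInterval) : Path (γ s) (γ t) where
  toContinuousMap := γ.comp (seg s t)
  source' := by show γ (seg s t 0) = γ s; rw [seg_zero]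
  target' := by show γ (seg s t 1) = γ t; rw [seg_one]

lemma restrict_range {X : Type*} [TopologicalSpace X] (γ : C(unitInterval, X))
    (s t : unitInterval) : Set.range ⇑(restrict γ s t) ⊆ Set.range ⇑γ := by
  rintro z ⟨v, rfl⟩
  exact ⟨seg s t v, rfl⟩

/-- A continuous map from the unit interval, viewed as a path. -/
def toPath {X : Type*} [TopologicalSpace X] (η : C(unitInterval, X)) : Path (η 0) (η 1) :=
  ⟨η, rfl, rfl⟩

lemma key {X : Type*} [TopologicalSpace X] [PathConnectedSpace X]
    (A B C : Set X) (hA : IsClosed A) (hB : IsClosed B)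
    (hAne : A.Nonempty) (hAB : A ∩ B = ∅)
    (h : CutsArcs A B C) (η : C(unitInterval, X))
    (hx : η 0 ∈ sideOf A B) (hy : η 1 ∈ sideOf B A) :
    (Set.range η ∩ C).Nonempty := by
  obtain ⟨a, ha⟩ := hAne
  obtain ⟨sp⟩ : Nonempty (Path (η 1) a) := ⟨PathConnectedSpace.somePath _ _⟩
  -- first hitting time of A ∪ B along sp
  set T : Set ℝ := Set.Icc 0 1 ∩ sp.extend ⁻¹' (A ∪ B) with hT
  have hTclosed : IsClosed T :=
    isClosed_Icc.inter ((hA.union hB).preimage sp.continuous_extend)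
  have hTne : T.Nonempty :=
    ⟨1, ⟨zero_le_one, le_refl 1⟩, by rw [Set.mem_preimage, Path.extend_one]; exact Or.inl ha⟩
  have hTbdd : BddBelow T := ⟨0, fun r hr => hr.1.1⟩
  have huT := hTclosed.csInf_mem hTne hTbdd
  set u : unitInterval := ⟨sInf T, huT.1⟩ with hu
  have hext : sp.extend (sInf T) = sp u := Path.extend_extends' sp u
  have hspu : sp u ∈ A ∪ B := by
    have h2 := huT.2
    rwa [Set.mem_preimage, hext] at h2
  have hmin : ∀ w : unitInterval, sp w ∈ A ∪ B → (u : ℝ) ≤ (w : ℝ) := by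
    intro w hw
    exact csInf_le hTbdd ⟨w.2, by rw [Set.mem_preimage, Path.extend_extends']; exact hw⟩
  -- the restricted path sp|[0,u], recast to start at η 1
  set ρ0 : Path (sp.toContinuousMap 0) (sp.toContinuousMap u) := restrict sp.toContinuousMap 0 u
    with hρ0
  have hsp0 : η 1 = sp.toContinuousMap 0 := sp.source.symm
  set ρ : Path (η 1) (sp u) := ρ0.cast hsp0 rfl with hρ
  have hρcoe : ⇑ρ = ⇑ρ0 := Path.cast_coe ρ0 hsp0 rfl
  -- any point of A ∪ B in the range of ρ must be sp u itself
  have hρhit : ∀ p ∈ Set.range ⇑ρ, p ∈ A ∪ B → p = sp u := by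
    intro p hp hpAB
    rw [hρcoe] at hp
    obtain ⟨v, hv⟩ := hp
    have hvval : ρ0 v = sp.toContinuousMap (seg 0 u v) := rfl
    rw [hvval] at hv
    have hle : (u : ℝ) ≤ (seg 0 u v : ℝ) := hmin _ (by
      show sp.toContinuousMap (seg 0 u v) ∈ A ∪ B
      rw [hv]; exact hpAB)
    have hge : ((seg 0 u v : unitInterval) : ℝ) ≤ (u : ℝ) := seg_le
    have : seg 0 u v = u := Subtype.ext (le_antisymm hge hle)
    rw [this] at hv
    exact hv.symm
  -- Step 1: the range of η meets A ∪ B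
  have step1 : (Set.range ⇑η ∩ (A ∪ B)).Nonempty := by
    by_contra hcon
    rw [Set.not_nonempty_iff_eq_empty] at hcon
    rcases hspu with hspuA | hspuB
    · -- sp u ∈ A: apply hy to ρ
      obtain ⟨q, hqρ, hqB⟩ := hy ρ.toContinuousMap ρ.source (by
        show ρ 1 ∈ A
        rw [ρ.target]; exact hspuA)
      have hq : q = sp u := hρhit q hqρ (Or.inr hqB)
      rw [hq] at hqB
      have : sp u ∈ A ∩ B := ⟨hspuA, hqB⟩
      rw [hAB] at this
      exact this
    · -- sp u ∈ B: apply hx to (toPath η).trans ρ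
      set τ : Path (η 0) (sp u) := (toPath η).trans ρ with hτ
      obtain ⟨p, hpτ, hpA⟩ := hx τ.toContinuousMap τ.source (by
        show τ 1 ∈ B
        rw [τ.target]; exact hspuB)
      have hpτ' : p ∈ Set.range ⇑(toPath η) ∪ Set.range ⇑ρ := by
        rw [← Path.trans_range]; exact hpτ
      rcases hpτ' with hpη | hpρ
      · have : p ∈ Set.range ⇑η ∩ (A ∪ B) := ⟨hpη, Or.inl hpA⟩
        rw [hcon] at this
        exact this
      · have hp : p = sp u := hρhit p hpρ (Or.inl hpA)
        rw [hp] at hpA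
        have : sp u ∈ A ∩ B := ⟨hpA, hspuB⟩
        rw [hAB] at this
        exact this
  -- Step 2: conclude
  obtain ⟨z, ⟨r, hr⟩, hzAB⟩ := step1
  rcases hzAB with hzA | hzB
  · -- η r ∈ A : consider η|[r,1] from A to η 1 ∈ S(B); its reverse shows it meets B
    set τ : Path (η r) (η 1) := restrict η r 1 with hτ
    obtain ⟨q, hqτ, hqB⟩ := hy τ.symm.toContinuousMap τ.symm.source (by
      show τ.symm 1 ∈ A
      rw [Path.target]
      show η r ∈ A
      rw [hr]; exact hzA)
    rw [show Set.range ⇑τ.symm.toContinuousMap = Set.range ⇑τ from Path.symm_range τ] at hqτ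
    have hmeetsA : (Set.range ⇑τ.toContinuousMap ∩ A).Nonempty := by
      refine ⟨η r, ⟨0, ?_⟩, by rw [hr]; exact hzA⟩
      exact τ.source
    obtain ⟨c, hcτ, hcC⟩ := h τ.toContinuousMap hmeetsA ⟨q, hqτ, hqB⟩
    exact ⟨c, restrict_range η r 1 hcτ, hcC⟩
  · -- η r ∈ B : consider η|[0,r] from η 0 ∈ S(A) to B; it meets A
    set τ : Path (η 0) (η r) := restrict η 0 r with hτ
    obtain ⟨p, hpτ, hpA⟩ := hx τ.toContinuousMap τ.source (by
      show τ 1 ∈ B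
      rw [τ.target, hr]; exact hzB)
    have hmeetsB : (Set.range ⇑τ.toContinuousMap ∩ B).Nonempty := by
      refine ⟨η r, ⟨1, ?_⟩, by rw [hr]; exact hzB⟩
      exact τ.target
    obtain ⟨c, hcτ, hcC⟩ := h τ.toContinuousMap ⟨p, hpτ, hpA⟩ hmeetsB
    exact ⟨c, restrict_range η 0 r hcτ, hcC⟩

end Stmt2Aux

open Stmt2Aux in
theorem stmt2 {X : Type*} [MetricSpace X] [ConnectedSpace X] [LocallyPathConnectedSpace X]
    (A B C : Set X) (hA : IsClosed A) (hB : IsClosed B) (hC : IsClosed C)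
    (hAne : A.Nonempty) (hBne : B.Nonempty) (hCne : C.Nonempty)
    (hAB : A ∩ B = ∅) :
    CutsArcs A B C ↔ CutsArcs (sideOf A B) (sideOf B A) C := by
  have hPC : PathConnectedSpace X := pathConnectedSpace_iff_connectedSpace.mpr ‹_›
  constructor
  · intro h γ hγS hγT
    obtain ⟨x, ⟨s, hs⟩, hxS⟩ := hγS
    obtain ⟨y, ⟨t, ht⟩, hyS⟩ := hγT
    set η : C(unitInterval, X) := γ.comp (seg s t) with hη
    have h0 : η 0 ∈ sideOf A B := by
      show γ (seg s t 0) ∈ sideOf A B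
      rw [seg_zero, hs]; exact hxS
    have h1 : η 1 ∈ sideOf B A := by
      show γ (seg s t 1) ∈ sideOf B A
      rw [seg_one, ht]; exact hyS
    obtain ⟨c, ⟨v, hv⟩, hcC⟩ := key A B C hA hB hAne hAB h η h0 h1
    exact ⟨c, ⟨seg s t v, hv⟩, hcC⟩
  · intro h γ hγA hγB
    obtain ⟨x, hx, hxA⟩ := hγA
    obtain ⟨y, hy, hyB⟩ := hγB
    refine h γ ⟨x, hx, ?_⟩ ⟨y, hy, ?_⟩
    · intro δ h0 _
      exact ⟨δ 0, Set.mem_range_self 0, h0.symm ▸ hxA⟩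
    · intro δ h0 _
      exact ⟨δ 0, Set.mem_range_self 0, h0.symm ▸ hyB⟩
end

section
/- Let X be a connected and locally arcwise connected metric space and let A, B, C ⊆ X be closed and nonempty sets with A ∩ B = ∅. Then C cuts the arcs between A and B if and only if there exists a continuous function f : X → ℝ such that f(x) ≤ 0 for all x ∈ S(A), f(x) ≥ 0 for all x ∈ S(B), and C = {x ∈ X : f(x) = 0}. -/
/-- Scaling map `t ↦ t₀ * t` on the unit interval. -/
def scaleCM (t0 : unitInterval) : C(unitInterval, unitInterval) where
  toFun t := ⟨t0.1 * t.1, ⟨mul_nonneg t0.2.1 t.2.1, mul_le_one₀ t0.2.2 t.2.1 t.2.2⟩⟩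
  continuous_toFun := Continuous.subtype_mk (continuous_const.mul continuous_subtype_val) _

/-- Affine map `t ↦ 1 - (1 - s) * t` on the unit interval. -/
def affCM (s : unitInterval) : C(unitInterval, unitInterval) where
  toFun t := ⟨1 - (1 - s.1) * t.1, Set.mem_Icc.mpr
    ⟨by nlinarith [s.2.1, s.2.2, t.2.1, t.2.2], by nlinarith [s.2.1, s.2.2, t.2.1, t.2.2]⟩⟩
  continuous_toFun := Continuous.subtype_mk
    (continuous_const.sub (continuous_const.mul continuous_subtype_val)) _

lemma key_lemma {X : Type*} [MetricSpace X] [ConnectedSpace X] [LocallyPathConnectedSpace X]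
    {A B C : Set X} (hA : IsClosed A) (hB : IsClosed B)
    (hAne : A.Nonempty) (hAB : A ∩ B = ∅)
    (hcut : CutsArcs A B C) {x y : X}
    (hx : x ∈ sideOf A B) (hy : y ∈ sideOf B A)
    (h : JoinedIn Cᶜ x y) : False := by
  obtain ⟨p, hp⟩ := h
  have hPC : PathConnectedSpace X := pathConnectedSpace_iff_connectedSpace.mpr ‹_›
  obtain ⟨a, ha⟩ := hAne
  obtain ⟨q⟩ : Joined y a := PathConnectedSpace.joined y a
  set E : Set unitInterval := {t | q t ∈ A ∪ B} with hE
  have hEne : E.Nonempty := ⟨1, by simp [hE, q.target, Set.mem_union, ha]⟩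
  have hEc : IsClosed E := (hA.union hB).preimage q.continuous
  obtain ⟨t0, ht0E, ht0lb⟩ := hEc.isCompact.exists_isLeast hEne
  set σ : C(unitInterval, unitInterval) := scaleCM t0 with hσ
  have hσ0 : σ 0 = 0 := Subtype.ext (mul_zero _)
  have hσ1 : σ 1 = t0 := Subtype.ext (mul_one _)
  have hmem : ∀ t : unitInterval, q (σ t) ∈ A ∪ B → q (σ t) = q t0 := by
    intro t hAt
    have h1 : σ t ≤ t0 := Subtype.mk_le_mk.mpr (mul_le_of_le_one_right t0.2.1 t.2.2)
    have h2 : t0 ≤ σ t := ht0lb hAt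
    rw [le_antisymm h1 h2]
  rcases ht0E with hcA | hcB
  · -- first hitting point is in A : contradict y ∈ sideOf B A
    obtain ⟨z, ⟨t, rfl⟩, hzB⟩ :=
      hy (q.toContinuousMap.comp σ) (by simp [hσ0]) (by simpa [hσ1] using hcA)
    have : q (σ t) = q t0 := hmem t (Or.inr (by simpa using hzB))
    simp only [ContinuousMap.comp_apply, Path.coe_toContinuousMap] at hzB this
    rw [this] at hzB
    exact Set.eq_empty_iff_forall_notMem.mp hAB (q t0) ⟨hcA, hzB⟩
  · -- first hitting point is in B
    set q' : Path y (q t0) :=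
      { toContinuousMap := q.toContinuousMap.comp σ
        source' := by simp [hσ0]
        target' := by simp [hσ1] }
    set r : Path x (q t0) := p.trans q' with hr
    obtain ⟨z, hzr, hzA⟩ := hx r.toContinuousMap (by simp) (by simpa using hcB)
    have hzr' : z ∈ Set.range p ∪ Set.range q' := by
      rw [← Path.trans_range]
      simpa using hzr
    have hzp : z ∈ Set.range p := by
      rcases hzr' with hzp | ⟨t, rfl⟩
      · exact hzp
      · exfalso
        have : q' t = q t0 := hmem t (Or.inl hzA)
        rw [this] at hzA
        exact Set.eq_empty_iff_forall_notMem.mp hAB (q t0) ⟨hzA, hcB⟩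
    obtain ⟨s, rfl⟩ := hzp
    -- path from y back along p to p s ∈ A must meet B
    set w : C(unitInterval, X) := p.toContinuousMap.comp (affCM s) with hw
    have hw0 : w 0 = y := by
      have : affCM s 0 = 1 := Subtype.ext (by simp [affCM])
      simp [hw, this]
    have hw1 : w 1 = p s := by
      have : affCM s 1 = s := Subtype.ext (by simp [affCM])
      simp [hw, this]
    obtain ⟨z', hz'w, hz'B⟩ := hy w hw0 (hw1 ▸ hzA)
    have hz'p : z' ∈ Set.range p := by
      obtain ⟨t, rfl⟩ := hz'w
      exact ⟨affCM s t, rfl⟩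
    -- now p meets A and B, hence meets C, contradiction
    obtain ⟨z'', hz''p, hz''C⟩ :=
      hcut p.toContinuousMap ⟨p s, by simpa using ⟨s, rfl⟩, hzA⟩
        ⟨z', by simpa using hz'p, hz'B⟩
    obtain ⟨t, rfl⟩ := hz''p
    exact hp t hz''C

theorem stmt3 {X : Type*} [MetricSpace X] [ConnectedSpace X] [LocallyPathConnectedSpace X]
    (A B C : Set X) (hA : IsClosed A) (hB : IsClosed B) (hC : IsClosed C)
    (hAne : A.Nonempty) (hBne : B.Nonempty) (hCne : C.Nonempty)
    (hAB : A ∩ B = ∅) :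
    CutsArcs A B C ↔
      ∃ f : X → ℝ, Continuous f ∧ (∀ x ∈ sideOf A B, f x ≤ 0) ∧
        (∀ x ∈ sideOf B A, 0 ≤ f x) ∧ C = {x : X | f x = 0} := by
  classical
  constructor
  · intro hcut
    set U : Set X := {z | ∃ w ∈ sideOf A B, JoinedIn Cᶜ w z} with hU
    have hUsat : ∀ z ∈ U, ∀ z' : X, JoinedIn Cᶜ z z' → z' ∈ U := by
      rintro z ⟨w, hw, hwz⟩ z' hzz'
      exact ⟨w, hw, hwz.trans hzz'⟩
    have hUopen : IsOpen U := by
      have : U = ⋃ w ∈ sideOf A B, pathComponentIn Cᶜ w := by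
        ext z
        simp only [hU, Set.mem_setOf_eq, Set.mem_iUnion, pathComponentIn,
          Set.mem_setOf_eq, exists_prop]
      rw [this]
      exact isOpen_biUnion fun w _ => hC.isOpen_compl.pathComponentIn w
    set f : X → ℝ := fun z => if z ∈ U then -Metric.infDist z C else Metric.infDist z C
      with hf
    have habs : ∀ z, |f z| = Metric.infDist z C := by
      intro z
      by_cases hz : z ∈ U <;>
        simp [hf, hz, abs_of_nonneg Metric.infDist_nonneg]
    have hlb : ∀ z, -Metric.infDist z C ≤ f z := fun z => neg_abs_le (f z) |>.trans_eq' (by rw [habs])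
    have hub : ∀ z, f z ≤ Metric.infDist z C := fun z => (le_abs_self (f z)).trans_eq (habs z)
    have hzero : ∀ z, f z = 0 ↔ z ∈ C := by
      intro z
      rw [← abs_eq_zero, habs, ← hC.mem_iff_infDist_zero hCne]
    refine ⟨f, ?_, ?_, ?_, ?_⟩
    · rw [continuous_iff_continuousAt]
      intro x
      by_cases hxC : x ∈ C
      · have h0 : f x = 0 := (hzero x).mpr hxC
        rw [ContinuousAt, h0]
        have hg : Filter.Tendsto (fun z => Metric.infDist z C) (nhds x) (nhds 0) := by
          have := (Metric.continuous_infDist_pt C).tendsto x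
          rwa [Metric.infDist_zero_of_mem hxC] at this
        exact tendsto_of_tendsto_of_tendsto_of_le_of_le (by simpa using hg.neg) hg hlb hub
      · have hxCc : x ∈ Cᶜ := hxC
        have hP : IsOpen (pathComponentIn Cᶜ x) := hC.isOpen_compl.pathComponentIn x
        have hxP : x ∈ pathComponentIn Cᶜ x := mem_pathComponentIn_self hxCc
        by_cases hxU : x ∈ U
        · have hev : Set.EqOn (fun z => -Metric.infDist z C) f (pathComponentIn Cᶜ x) := by
            intro z hz
            have : z ∈ U := hUsat x hxU z hz
            simp [hf, this]
          exact ((Metric.continuous_infDist_pt C).neg.continuousAt).congr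
            (Filter.eventuallyEq_of_mem (hP.mem_nhds hxP) hev)
        · have hev : Set.EqOn (fun z => Metric.infDist z C) f (pathComponentIn Cᶜ x) := by
            intro z hz
            have hzU : z ∉ U := by
              intro hzU
              exact hxU (hUsat z hzU x (JoinedIn.symm hz))
            simp [hf, hzU]
          exact ((Metric.continuous_infDist_pt C).continuousAt).congr
            (Filter.eventuallyEq_of_mem (hP.mem_nhds hxP) hev)
    · intro x hx
      by_cases hxC : x ∈ C
      · exact le_of_eq ((hzero x).mpr hxC)
      · have : x ∈ U := ⟨x, hx, JoinedIn.refl hxC⟩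
        simp only [hf, this, if_pos]
        simpa using Metric.infDist_nonneg
    · intro x hx
      have hxU : x ∉ U := by
        rintro ⟨w, hw, hwx⟩
        exact key_lemma hA hB hAne hAB hcut hw hx hwx
      simp only [hf, hxU, if_neg, not_false_iff]
      exact Metric.infDist_nonneg
    · ext z
      simp only [Set.mem_setOf_eq]
      exact (hzero z).symm
  · rintro ⟨f, hf, hfa, hfb, hfC⟩ γ ⟨za, hza, hzaA⟩ ⟨zb, hzb, hzbB⟩
    obtain ⟨ta, rfl⟩ := hza
    obtain ⟨tb, rfl⟩ := hzb
    have hAS : A ⊆ sideOf A B := fun a ha δ hδ0 _ => ⟨δ 0, ⟨0, rfl⟩, hδ0 ▸ ha⟩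
    have hBS : B ⊆ sideOf B A := fun b hb δ hδ0 _ => ⟨δ 0, ⟨0, rfl⟩, hδ0 ▸ hb⟩
    have h1 : f (γ ta) ≤ 0 := hfa _ (hAS hzaA)
    have h2 : 0 ≤ f (γ tb) := hfb _ (hBS hzbB)
    have hivt := isPreconnected_univ.intermediate_value (Set.mem_univ ta) (Set.mem_univ tb)
      ((hf.comp γ.continuous).continuousOn)
    obtain ⟨t, -, ht⟩ := hivt ⟨h1, h2⟩
    refine ⟨γ t, ⟨t, rfl⟩, ?_⟩
    rw [hfC]
    exact ht
end

section
/- Let X be a connected and locally arcwise connected metric space and let A, B ⊆ X be closed and nonempty sets with A ∩ B = ∅. Let Γ ⊆ X be a compact connected set with Γ ∩ A ≠ ∅ and Γ ∩ B ≠ ∅. Then: (i) for every ε > 0 there exists a path γ : [0,1] → X with γ(0) ∈ A, γ(1) ∈ B, and range of γ contained in B(Γ,ε) := {x ∈ X : dist(x,Γ) < ε}; (ii) if moreover X is locally compact and C ⊆ X is a closed set which cuts the arcs between A and B, then Γ ∩ C ≠ ∅. -/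
theorem stmt4 {X : Type*} [MetricSpace X] [ConnectedSpace X] [LocallyPathConnectedSpace X]
    (A B : Set X) (hA : IsClosed A) (hB : IsClosed B)
    (hAne : A.Nonempty) (hBne : B.Nonempty) (hAB : A ∩ B = ∅)
    (Γ : Set X) (hΓcpt : IsCompact Γ) (hΓconn : IsConnected Γ)
    (hΓA : (Γ ∩ A).Nonempty) (hΓB : (Γ ∩ B).Nonempty) :
    (∀ ε : ℝ, 0 < ε → ∃ γ : C(unitInterval, X),
      γ 0 ∈ A ∧ γ 1 ∈ B ∧
      Set.range γ ⊆ {x : X | ∃ w ∈ Γ, dist x w < ε}) ∧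
    (LocallyCompactSpace X → ∀ C : Set X, IsClosed C → CutsArcs A B C →
      (Γ ∩ C).Nonempty) := by
  have key : ∀ ε : ℝ, 0 < ε → ∃ γ : C(unitInterval, X),
      γ 0 ∈ A ∧ γ 1 ∈ B ∧ Set.range γ ⊆ {x : X | ∃ w ∈ Γ, dist x w < ε} := by
    intro ε hε
    obtain ⟨a, haΓ, haA⟩ := hΓA
    obtain ⟨b, hbΓ, hbB⟩ := hΓB
    set U : Set X := {x : X | ∃ w ∈ Γ, dist x w < ε} with hUdef
    have hUopen : IsOpen U := by
      have : U = ⋃ w ∈ Γ, Metric.ball w ε := by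
        ext x; simp [hUdef, Metric.mem_ball]
      rw [this]
      exact isOpen_biUnion fun w _ => Metric.isOpen_ball
    have hΓU : Γ ⊆ U := fun x hx => ⟨x, hx, by simpa using hε⟩
    set V := connectedComponentIn U a with hVdef
    have hVopen : IsOpen V := hUopen.connectedComponentIn
    have hΓV : Γ ⊆ V := hΓconn.isPreconnected.subset_connectedComponentIn haΓ hΓU
    have hVconn : IsConnected V :=
      (isConnected_connectedComponentIn_iff).mpr (hΓU haΓ)
    have hVpath : IsPathConnected V :=
      (hVopen.isConnected_iff_isPathConnected).mp hVconn
    obtain ⟨γ, hγ⟩ := hVpath.joinedIn a (hΓV haΓ) b (hΓV hbΓ)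
    refine ⟨γ.toContinuousMap, by simpa using haA, by simpa using hbB, ?_⟩
    rintro x ⟨t, rfl⟩
    exact connectedComponentIn_subset U a (hγ t)
  refine ⟨key, fun _ C hC hcut => ?_⟩
  by_contra hempty
  rw [Set.not_nonempty_iff_eq_empty] at hempty
  rcases C.eq_empty_or_nonempty with rfl | hCne
  · obtain ⟨γ, h0, h1, _⟩ := key 1 one_pos
    obtain ⟨x, _, hxC⟩ := hcut γ ⟨γ 0, Set.mem_range_self _, h0⟩ ⟨γ 1, Set.mem_range_self _, h1⟩
    exact hxC
  · obtain ⟨w0, hw0, hmin⟩ := hΓcpt.exists_isMinOn hΓconn.nonempty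
      ((Metric.continuous_infDist_pt C).continuousOn)
    have hεpos : 0 < Metric.infDist w0 C := by
      rw [← hC.notMem_iff_infDist_pos hCne]
      intro hmem
      exact Set.eq_empty_iff_forall_notMem.mp hempty w0 ⟨hw0, hmem⟩
    obtain ⟨γ, h0, h1, hrange⟩ := key _ hεpos
    obtain ⟨x, hxr, hxC⟩ := hcut γ ⟨γ 0, Set.mem_range_self _, h0⟩ ⟨γ 1, Set.mem_range_self _, h1⟩
    obtain ⟨w, hwΓ, hdw⟩ := hrange hxr
    have h1 : Metric.infDist w0 C ≤ Metric.infDist w C := hmin hwΓ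
    have h2 : Metric.infDist w C ≤ dist w x := Metric.infDist_le_dist_of_mem hxC
    rw [dist_comm] at hdw
    linarith
end

section
/- Assume there is a double sequence of oriented N-dimensional rectangles (X̃_k)_{k∈ℤ} of a metric space Z, with X̃_k = (X_k, X_k⁻), and a sequence ((D_k, ψ_k))_{k∈ℤ} with D_k ⊆ X_k such that (D_k, ψ_k) : X̃_k ⥲ X̃_{k+1} for all k ∈ ℤ. Then there is a sequence (w_k)_{k∈ℤ} such that w_k ∈ D_k and ψ_k(w_k) = w_{k+1} for all k ∈ ℤ. -/
/-- The unit cube `[0,1]^N` in `ℝ^N`. -/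
def unitCube (N : ℕ) : Set (Fin N → ℝ) := Set.Icc 0 1

/-- `(X, Xl ∪ Xr)` is an oriented `(n+1)`-dimensional rectangle of the metric
space `Z`: `X` is the image of the unit cube under a homeomorphism onto its image
(equivalently, a continuous injection on the compact cube), with `Xl` and `Xr`
the images of the two faces `x_N = 0` and `x_N = 1`. -/
def IsOrientedRect {Z : Type*} [TopologicalSpace Z] (n : ℕ) (X Xl Xr : Set Z) : Prop :=
  ∃ h : (Fin (n + 1) → ℝ) → Z,
    ContinuousOn h (unitCube (n + 1)) ∧ Set.InjOn h (unitCube (n + 1)) ∧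
    X = h '' unitCube (n + 1) ∧
    Xl = h '' {x ∈ unitCube (n + 1) | x (Fin.last n) = 0} ∧
    Xr = h '' {x ∈ unitCube (n + 1) | x (Fin.last n) = 1}

/-- `(D, K, ψ)` stretches the oriented rectangle `(X, Xl ∪ Xr)` to `(Y, Yl ∪ Yr)`
along the paths: `K ⊆ D` is compact, `ψ` is continuous on `K`, and every path in
`X` joining `Xl` and `Xr` has a sub-path with range in `K`, whose `ψ`-image is
contained in `Y` and meets both `Yl` and `Yr`. -/
def StretchesWith {Z : Type*} [TopologicalSpace Z]
    (X Xl Xr Y Yl Yr D K : Set Z) (ψ : Z → Z) : Prop :=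
  K ⊆ D ∧ IsCompact K ∧ ContinuousOn ψ K ∧
  ∀ γ : C(unitInterval, Z), Set.range γ ⊆ X →
    (Set.range γ ∩ Xl).Nonempty → (Set.range γ ∩ Xr).Nonempty →
    ∃ t₁ t₂ : unitInterval, t₁ ≤ t₂ ∧
      γ '' Set.Icc t₁ t₂ ⊆ K ∧
      ψ '' (γ '' Set.Icc t₁ t₂) ⊆ Y ∧
      (ψ '' (γ '' Set.Icc t₁ t₂) ∩ Yl).Nonempty ∧
      (ψ '' (γ '' Set.Icc t₁ t₂) ∩ Yr).Nonempty

/-- `(D, ψ)` stretches the oriented rectangle `(X, Xl ∪ Xr)` to `(Y, Yl ∪ Yr)`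
along the paths: there is a compact `K ⊆ D` witnessing the stretching. -/
def Stretches {Z : Type*} [TopologicalSpace Z]
    (X Xl Xr Y Yl Yr D : Set Z) (ψ : Z → Z) : Prop :=
  ∃ K : Set Z, StretchesWith X Xl Xr Y Yl Yr D K ψ

open Set

lemma exists_crossing {Z : Type*} [TopologicalSpace Z] {n : ℕ} {X Xl Xr : Set Z}
    (h : IsOrientedRect n X Xl Xr) :
    ∃ γ : C(unitInterval, Z), Set.range γ ⊆ X ∧
      (Set.range γ ∩ Xl).Nonempty ∧ (Set.range γ ∩ Xr).Nonempty := by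
  obtain ⟨h, hc, -, hX, hXl, hXr⟩ := h
  set p : unitInterval → (Fin (n+1) → ℝ) := fun t i => if i = Fin.last n then (t:ℝ) else 0 with hp
  have hpmem : ∀ t, p t ∈ unitCube (n+1) := by
    intro t
    refine ⟨fun i => ?_, fun i => ?_⟩ <;> simp only [hp, Pi.zero_apply, Pi.one_apply] <;>
      split <;> simp [t.2.1, t.2.2]
  have hpc : Continuous p := by
    refine continuous_pi fun i => ?_
    by_cases hi : i = Fin.last n
    · show Continuous fun t : unitInterval => if i = Fin.last n then (t:ℝ) else 0
      simp only [if_pos hi]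
      exact continuous_subtype_val
    · show Continuous fun t : unitInterval => if i = Fin.last n then (t:ℝ) else 0
      simp only [if_neg hi]
      exact continuous_const
  refine ⟨⟨fun t => h (p t), hc.comp_continuous hpc hpmem⟩, ?_, ?_, ?_⟩
  · rintro - ⟨t, rfl⟩
    rw [hX]
    exact mem_image_of_mem _ (hpmem t)
  · refine ⟨h (p 0), mem_range_self 0, ?_⟩
    rw [hXl]
    exact mem_image_of_mem _ ⟨hpmem 0, by simp [hp]⟩
  · refine ⟨h (p 1), mem_range_self 1, ?_⟩
    rw [hXr]
    exact mem_image_of_mem _ ⟨hpmem 1, by simp [hp]⟩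

lemma step_lemma {Z : Type*} [TopologicalSpace Z] {X Xl Xr Y Yl Yr D K : Set Z} {ψ : Z → Z}
    (hs : StretchesWith X Xl Xr Y Yl Yr D K ψ)
    (γ : C(unitInterval, Z)) (h1 : Set.range γ ⊆ X)
    (h2 : (Set.range γ ∩ Xl).Nonempty) (h3 : (Set.range γ ∩ Xr).Nonempty) :
    ∃ γ' : C(unitInterval, Z), Set.range γ' ⊆ Y ∧ (Set.range γ' ∩ Yl).Nonempty ∧
      (Set.range γ' ∩ Yr).Nonempty ∧
      ∀ z ∈ Set.range γ', ∃ x, x ∈ K ∧ x ∈ Set.range γ ∧ ψ x = z := by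
  obtain ⟨hKD, hKcomp, hψc, hmain⟩ := hs
  obtain ⟨t₁, t₂, hle, hK, hY, hYl, hYr⟩ := hmain γ h1 h2 h3
  have hle' : (t₁:ℝ) ≤ (t₂:ℝ) := hle
  set c : unitInterval → unitInterval := fun s =>
    ⟨max (t₁:ℝ) (min (t₂:ℝ) (s:ℝ)),
      le_trans t₁.2.1 (le_max_left _ _),
      max_le t₁.2.2 (le_trans (min_le_left _ _) t₂.2.2)⟩ with hc
  have hcc : Continuous c :=
    Continuous.subtype_mk (continuous_const.max (continuous_const.min continuous_subtype_val)) _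
  have hcr : Set.range c = Set.Icc t₁ t₂ := by
    apply Set.Subset.antisymm
    · rintro - ⟨s, rfl⟩
      constructor
      · exact Subtype.coe_le_coe.mp (le_max_left _ _)
      · exact Subtype.coe_le_coe.mp (max_le hle' (min_le_left _ _))
    · intro y hy
      refine ⟨y, Subtype.ext ?_⟩
      show max (t₁:ℝ) (min (t₂:ℝ) (y:ℝ)) = (y:ℝ)
      rw [min_eq_right (Subtype.coe_le_coe.mpr hy.2), max_eq_right (Subtype.coe_le_coe.mpr hy.1)]
  have hmem : ∀ s, γ (c s) ∈ K := fun s => hK ⟨c s, hcr ▸ Set.mem_range_self s, rfl⟩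
  refine ⟨⟨fun s => ψ (γ (c s)), hψc.comp_continuous (γ.continuous.comp hcc) hmem⟩, ?_⟩
  have hr : Set.range (fun s => ψ (γ (c s))) = ψ '' (γ '' Set.Icc t₁ t₂) := by
    rw [← hcr, ← Set.range_comp, ← Set.range_comp]
    rfl
  simp only [ContinuousMap.coe_mk, hr]
  refine ⟨hY, hYl, hYr, ?_⟩
  rintro z ⟨x, hx, rfl⟩
  exact ⟨x, hK hx, image_subset_range γ _ hx, rfl⟩

open Filter Topology

theorem stmt13 {Z : Type*} [MetricSpace Z] {n : ℕ}
    (X Xl Xr D : ℤ → Set Z) (ψ : ℤ → Z → Z)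
    (hRect : ∀ k, IsOrientedRect n (X k) (Xl k) (Xr k))
    (hD : ∀ k, D k ⊆ X k)
    (hstretch : ∀ k, Stretches (X k) (Xl k) (Xr k)
      (X (k + 1)) (Xl (k + 1)) (Xr (k + 1)) (D k) (ψ k)) :
    ∃ w : ℤ → Z, ∀ k, w k ∈ D k ∧ ψ k (w k) = w (k + 1) := by
  choose K hK using hstretch
  -- finite chains
  have chainAux : ∀ (M : ℕ) (a : ℤ) (γ : C(unitInterval, Z)),
      Set.range γ ⊆ X a → (Set.range γ ∩ Xl a).Nonempty → (Set.range γ ∩ Xr a).Nonempty →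
      ∃ z : ℤ → Z, z a ∈ Set.range γ ∧
        ∀ k, a ≤ k → k < a + M → z k ∈ K k ∧ ψ k (z k) = z (k+1) := by
    intro M
    induction M with
    | zero =>
      intro a γ _ _ _
      exact ⟨fun _ => γ 0, Set.mem_range_self 0, fun k h1 h2 => absurd h2 (by omega)⟩
    | succ M ih =>
      intro a γ h1 h2 h3
      obtain ⟨γ', g1, g2, g3, g4⟩ := step_lemma (hK a) γ h1 h2 h3
      obtain ⟨z, hz1, hz⟩ := ih (a+1) γ' g1 g2 g3
      obtain ⟨x, hxK, hxγ, hxψ⟩ := g4 _ hz1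
      refine ⟨Function.update z a x, by rw [Function.update_self]; exact hxγ, ?_⟩
      intro k hk1 hk2
      by_cases hka : k = a
      · subst hka
        rw [Function.update_self, Function.update_of_ne (by omega)]
        exact ⟨hxK, hxψ⟩
      · have hk1' : a + 1 ≤ k := by omega
        have hk2' : k < (a + 1) + M := by push_cast at hk2 ⊢; omega
        rw [Function.update_of_ne hka, Function.update_of_ne (by omega)]
        exact hz k hk1' hk2'
  have chain : ∀ (a : ℤ) (M : ℕ), ∃ z : ℤ → Z,
      ∀ k, a ≤ k → k < a + M → z k ∈ K k ∧ ψ k (z k) = z (k+1) := by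
    intro a M
    obtain ⟨γ, h1, h2, h3⟩ := exists_crossing (hRect a)
    obtain ⟨z, -, hz⟩ := chainAux M a γ h1 h2 h3
    exact ⟨z, hz⟩
  -- K k is nonempty
  have hKne : ∀ k, (K k).Nonempty := by
    intro k
    obtain ⟨z, hz⟩ := chain k 1
    exact ⟨z k, (hz k le_rfl (by push_cast; omega)).1⟩
  choose d hd using hKne
  -- the approximating sequences
  have hzm : ∀ m : ℕ, ∃ z : ℤ → Z, ∀ k, -(m:ℤ) - 1 ≤ k → k < (m:ℤ) + 2 →
      z k ∈ K k ∧ ψ k (z k) = z (k+1) := by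
    intro m
    obtain ⟨z, hz⟩ := chain (-(m:ℤ) - 1) (2*m + 3)
    exact ⟨z, fun k hk1 hk2 => hz k hk1 (by push_cast; omega)⟩
  choose zs hzs using hzm
  set ζ : ℕ → ℤ → Z := fun m k => if -(m:ℤ) - 1 ≤ k ∧ k < (m:ℤ) + 2 then zs m k else d k with hζ
  have hζS : ∀ m, ζ m ∈ Set.pi Set.univ (fun k => K k) := by
    intro m
    rw [Set.mem_univ_pi]
    intro k
    by_cases h : -(m:ℤ) - 1 ≤ k ∧ k < (m:ℤ) + 2
    · simpa only [hζ, if_pos h] using (hzs m k h.1 h.2).1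
    · simpa only [hζ, if_neg h] using hd k
  have hScomp : IsCompact (Set.pi Set.univ fun k => K k) :=
    isCompact_univ_pi fun k => (hK k).2.1
  obtain ⟨w, hwS, hwcl⟩ := hScomp.exists_clusterPt (f := Filter.map ζ atTop)
    (Filter.le_principal_iff.mpr (Filter.mem_map.mpr (Filter.Eventually.of_forall hζS)))
  refine ⟨w, fun k => ?_⟩
  have hwk : w k ∈ K k := hwS k (Set.mem_univ k)
  -- pass to the pair and use the closed graph
  set g : (ℤ → Z) → Z × Z := fun p => (p k, p (k+1)) with hg
  have hgc : Continuous g := (continuous_apply k).prodMk (continuous_apply (k+1))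
  have hclg : ClusterPt (g w) (Filter.map g (Filter.map ζ atTop)) :=
    hwcl.map hgc.continuousAt Filter.tendsto_map
  set C : Set (Z × Z) := (fun x => (x, ψ k x)) '' K k with hC
  have hCcomp : IsCompact C :=
    ((hK k).2.1).image_of_continuousOn (continuousOn_id.prodMk (hK k).2.2.1)
  have hev : ∀ᶠ m in atTop, g (ζ m) ∈ C := by
    filter_upwards [Filter.eventually_ge_atTop (k.natAbs + 1)] with m hm
    have hm' : (k.natAbs : ℤ) + 1 ≤ (m : ℤ) := by exact_mod_cast hm
    have e1 : ζ m k = zs m k := by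
      rw [hζ]; exact if_pos (by omega)
    have e2 : ζ m (k+1) = zs m (k+1) := by
      rw [hζ]; exact if_pos (by omega)
    have := hzs m k (by omega) (by omega)
    refine ⟨zs m k, this.1, ?_⟩
    rw [hg]
    simp only [e1, e2, this.2]
  have hmem : g w ∈ C := by
    have h1 : Filter.map g (Filter.map ζ atTop) ≤ Filter.principal C := by
      rw [Filter.map_map, Filter.le_principal_iff, Filter.mem_map]
      exact hev
    exact isClosed_iff_clusterPt.mp hCcomp.isClosed _ (hclg.mono h1)
  obtain ⟨x, hxK, hxe⟩ := hmem
  have hx1 : x = w k := congrArg Prod.fst hxe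
  have hx2 : ψ k x = w (k+1) := congrArg Prod.snd hxe
  exact ⟨(hK k).1 hwk, by rw [← hx1, hx2]⟩
end

section
/- Assume there is a double sequence of oriented N-dimensional rectangles (X̃_k)_{k∈ℤ} of a metric space Z, with X̃_k = (X_k, X_k⁻) and X_k⁻ = X_ℓ^k ∪ X_r^k, and a sequence ((D_k, ψ_k))_{k∈ℤ} with D_k ⊆ X_k such that (D_k, ψ_k) : X̃_k ⥲ X̃_{k+1} for all k ∈ ℤ. Then for each j ∈ ℤ there exists a compact set S ⊆ D_j which cuts the arcs between X_ℓ^j and X_r^j in X_j and is such that for every w ∈ S there is a sequence (y_i)_{i≥j} with y_j = w, y_i ∈ D_i and ψ_i(y_i) = y_{i+1} for all i ≥ j. -/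
/-- `C` cuts the arcs between `A` and `B` in `X` (subsets of the ambient space `Z`):
every path in `Z` with range contained in `X` whose range meets both `A` and `B`
has range meeting `C`. -/
def CutsArcsIn {Z : Type*} [TopologicalSpace Z] (X A B C : Set Z) : Prop :=
  ∀ γ : C(unitInterval, Z), Set.range γ ⊆ X →
    (Set.range γ ∩ A).Nonempty → (Set.range γ ∩ B).Nonempty →
    (Set.range γ ∩ C).Nonempty


lemma icc_zero_one_eq_univ : Set.Icc (0 : unitInterval) 1 = Set.univ := by
  ext t
  simp [Set.mem_Icc, unitInterval.nonneg', unitInterval.le_one']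

lemma exists_affine (a b : unitInterval) (hab : a ≤ b) :
    ∃ f : C(unitInterval, unitInterval), f 0 = a ∧ f 1 = b ∧ Monotone f ∧
      ∀ t₁ t₂ : unitInterval, t₁ ≤ t₂ → f '' Set.Icc t₁ t₂ = Set.Icc (f t₁) (f t₂) := by
  have hab' : (a : ℝ) ≤ b := hab
  have hmem : ∀ t : unitInterval, (a : ℝ) + t * ((b : ℝ) - a) ∈ unitInterval := by
    intro t
    have h0a := a.2.1; have h1b := b.2.2
    have h0t := t.2.1; have h1t := t.2.2
    constructor <;> nlinarith
  set g : unitInterval → unitInterval := fun t => ⟨(a : ℝ) + t * ((b : ℝ) - a), hmem t⟩ with hg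
  have hgc : Continuous g := by
    apply Continuous.subtype_mk
    fun_prop
  have hmono : Monotone g := by
    intro t t' htt
    have : (t : ℝ) ≤ t' := htt
    have hba : (0:ℝ) ≤ (b : ℝ) - a := by linarith
    simp only [hg, Subtype.mk_le_mk]
    nlinarith
  refine ⟨⟨g, hgc⟩, ?_, ?_, hmono, ?_⟩
  · apply Subtype.ext; simp [hg]
  · apply Subtype.ext; simp [hg]
  · intro t₁ t₂ ht
    apply Set.Subset.antisymm
    · intro s hs
      obtain ⟨t, ht', rfl⟩ := hs
      exact ⟨hmono ht'.1, hmono ht'.2⟩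
    · intro s hs
      simp only [ContinuousMap.coe_mk] at hs ⊢
      rcases eq_or_lt_of_le hab' with heq | hlt
      · refine ⟨t₁, ⟨le_refl _, ht⟩, ?_⟩
        apply Subtype.ext
        have h1 : (g t₁ : ℝ) = a := by simp [hg, ← heq]
        have h2 : (g t₂ : ℝ) = a := by simp [hg, ← heq]
        have := hs.1; have := hs.2
        have hs1 : (g t₁ : ℝ) ≤ s := hs.1
        have hs2 : (s : ℝ) ≤ g t₂ := hs.2
        simp only [hg]
        rw [← heq]; ring_nf
        apply le_antisymm <;> [skip; skip] <;> first
          | (rw [h1] at hs1; linarith)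
          | (rw [h2] at hs2; linarith)
      · have hba : (0:ℝ) < (b : ℝ) - a := by linarith
        set u : ℝ := ((s : ℝ) - a) / ((b : ℝ) - a) with hu
        have hgt1 : (g t₁ : ℝ) = (a : ℝ) + t₁ * ((b:ℝ) - a) := rfl
        have hgt2 : (g t₂ : ℝ) = (a : ℝ) + t₂ * ((b:ℝ) - a) := rfl
        have hs1 : (a : ℝ) + t₁ * ((b:ℝ) - a) ≤ s := by
          have := hs.1; rw [← hgt1]; exact_mod_cast this
        have hs2 : (s : ℝ) ≤ (a : ℝ) + t₂ * ((b:ℝ) - a) := by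
          have := hs.2; rw [← hgt2]; exact_mod_cast this
        have ht1u : (t₁ : ℝ) ≤ u := by
          rw [hu, le_div_iff₀ hba]; linarith
        have hut2 : u ≤ (t₂ : ℝ) := by
          rw [hu, div_le_iff₀ hba]; linarith
        have humem : u ∈ unitInterval := by
          constructor
          · exact le_trans t₁.2.1 ht1u
          · exact le_trans hut2 t₂.2.2
        refine ⟨⟨u, humem⟩, ⟨ht1u, hut2⟩, ?_⟩
        apply Subtype.ext
        show (a : ℝ) + u * ((b:ℝ) - a) = s
        rw [hu]; field_simp; ring

lemma nat_rec_chain {α : Type*} [Preorder α] (Q : ℕ → α → α → Prop) (a₀ b₀ : α)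
    (h0 : Q 0 a₀ b₀)
    (hstep : ∀ m a b, Q m a b → ∃ a' b', a ≤ a' ∧ b' ≤ b ∧ Q (m + 1) a' b') :
    ∃ A B : ℕ → α, (∀ m, Q m (A m) (B m)) ∧
      (∀ m, A m ≤ A (m + 1)) ∧ (∀ m, B (m + 1) ≤ B m) := by
  choose a' b' ha hb hq using hstep
  let F : ∀ m : ℕ, {p : α × α // Q m p.1 p.2} :=
    fun m => Nat.rec ⟨(a₀, b₀), h0⟩
      (fun m ih => ⟨(a' m ih.1.1 ih.1.2 ih.2, b' m ih.1.1 ih.1.2 ih.2),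
        hq m ih.1.1 ih.1.2 ih.2⟩) m
  refine ⟨fun m => (F m).1.1, fun m => (F m).1.2, fun m => (F m).2, fun m => ?_, fun m => ?_⟩
  · exact ha m (F m).1.1 (F m).1.2 (F m).2
  · exact hb m (F m).1.1 (F m).1.2 (F m).2


/-- Iterated composition of the maps `ψ k`, starting at index `j`. -/
def PhiIter {Z : Type*} (ψ : ℤ → Z → Z) (j : ℤ) : ℕ → Z → Z
  | 0 => id
  | (m + 1) => fun z => ψ (j + m) (PhiIter ψ j m z)


theorem stmt15 {Z : Type*} [MetricSpace Z] {n : ℕ}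
    (X Xl Xr D : ℤ → Set Z) (ψ : ℤ → Z → Z)
    (hRect : ∀ k, IsOrientedRect n (X k) (Xl k) (Xr k))
    (hD : ∀ k, D k ⊆ X k)
    (hstretch : ∀ k, Stretches (X k) (Xl k) (Xr k)
      (X (k + 1)) (Xl (k + 1)) (Xr (k + 1)) (D k) (ψ k)) :
    ∀ j : ℤ, ∃ S : Set Z, IsCompact S ∧ S ⊆ D j ∧
      CutsArcsIn (X j) (Xl j) (Xr j) S ∧
      ∀ w ∈ S, ∃ y : ℤ → Z, y j = w ∧
        ∀ i, j ≤ i → y i ∈ D i ∧ ψ i (y i) = y (i + 1) := by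
  classical
  intro j
  choose K hs using hstretch
  have hKD : ∀ k, K k ⊆ D k := fun k => (hs k).1
  have hKc : ∀ k, IsCompact (K k) := fun k => (hs k).2.1
  have hψc : ∀ k, ContinuousOn (ψ k) (K k) := fun k => (hs k).2.2.1
  have hstr := fun k => (hs k).2.2.2
  set Φ : ℕ → Z → Z := PhiIter ψ j with hΦdef
  have hΦ0 : ∀ z, Φ 0 z = z := fun z => rfl
  have hΦs : ∀ m z, Φ (m + 1) z = ψ (j + m) (Φ m z) := fun m z => rfl
  set T : ℕ → Set Z := fun m => {z | ∀ i < m, Φ i z ∈ K (j + i)} with hTdef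
  have hTmono : ∀ m m', m ≤ m' → T m' ⊆ T m :=
    fun m m' h z hz i hi => hz i (lt_of_lt_of_le hi h)
  -- continuity of the iterates on T m
  have hA : ∀ m, ContinuousOn (Φ m) (T m) := by
    intro m; induction m with
    | zero => exact continuousOn_id
    | succ m ih =>
      have h1 : ContinuousOn (Φ m) (T (m + 1)) := ih.mono (hTmono m (m + 1) (by omega))
      have h2 : Set.MapsTo (Φ m) (T (m + 1)) (K (j + m)) := fun z hz => hz m (by omega)
      have h3 : ContinuousOn (fun z => ψ (j + m) (Φ m z)) (T (m + 1)) :=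
        (hψc (j + m)).comp h1 h2
      exact h3
  -- compactness of the T (m+1)
  have hT1 : T 1 = K j := by
    ext z
    simp only [hTdef, Set.mem_setOf_eq, Nat.lt_one_iff, forall_eq]
    rw [hΦ0]
    norm_num
  have hB : ∀ m, IsCompact (T (m + 1)) := by
    intro m; induction m with
    | zero => rw [hT1]; exact hKc j
    | succ m ih =>
      have heq : T (m + 2) = T (m + 1) ∩ (Φ (m + 1)) ⁻¹' (K (j + (m + 1 : ℕ))) := by
        ext z
        simp only [hTdef, Set.mem_setOf_eq, Set.mem_inter_iff, Set.mem_preimage]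
        constructor
        · intro h
          exact ⟨fun i hi => h i (by omega), h (m + 1) (by omega)⟩
        · rintro ⟨h1, h2⟩ i hi
          rcases Nat.lt_succ_iff_lt_or_eq.mp hi with h | h
          · exact h1 i h
          · subst h; exact h2
      have hcl : IsClosed (T (m + 1) ∩ (Φ (m + 1)) ⁻¹' (K (j + (m + 1 : ℕ)))) :=
        (hA (m + 1)).preimage_isClosed_of_isClosed ih.isClosed (hKc _).isClosed
      rw [heq]
      exact ih.of_isClosed_subset hcl Set.inter_subset_left
  -- the candidate set
  refine ⟨{z | ∀ i : ℕ, Φ i z ∈ K (j + i)}, ?_, ?_, ?_, ?_⟩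
  · -- compact
    have heq : {z | ∀ i : ℕ, Φ i z ∈ K (j + i)} = ⋂ m, T (m + 1) := by
      ext z
      simp only [Set.mem_setOf_eq, Set.mem_iInter, hTdef]
      constructor
      · intro h m i _; exact h i
      · intro h i; exact h i i (by omega)
    rw [heq]
    exact (hB 0).of_isClosed_subset (isClosed_iInter fun m => (hB m).isClosed)
      (Set.iInter_subset _ 0)
  · -- subset of D j
    intro z hz
    have := hz 0
    rw [hΦ0] at this
    norm_num at this
    exact hKD j this
  · -- cuts the arcs
    intro γ hrange hl hr
    set Inv : ℕ → unitInterval → unitInterval → Prop := fun m a b =>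
      a ≤ b ∧
      (∀ s ∈ Set.Icc a b, ∀ i < m, Φ i (γ s) ∈ K (j + i)) ∧
      ((fun s => Φ m (γ s)) '' Set.Icc a b ⊆ X (j + m)) ∧
      ((fun s => Φ m (γ s)) '' Set.Icc a b ∩ Xl (j + m)).Nonempty ∧
      ((fun s => Φ m (γ s)) '' Set.Icc a b ∩ Xr (j + m)).Nonempty with hInv
    have h01 : (0 : unitInterval) ≤ 1 := unitInterval.nonneg'
    have base : Inv 0 0 1 := by
      have himg : (fun s => Φ 0 (γ s)) '' Set.Icc (0:unitInterval) 1 = Set.range γ := by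
        rw [icc_zero_one_eq_univ]
        simp only [hΦ0]
        exact Set.image_univ
      refine ⟨h01, fun s _ i hi => absurd hi (by omega), ?_, ?_, ?_⟩ <;>
        rw [himg] <;> norm_num
      · exact hrange
      · exact hl
      · exact hr
    have step : ∀ m (a b : unitInterval), Inv m a b →
        ∃ a' b' : unitInterval, a ≤ a' ∧ b' ≤ b ∧ Inv (m + 1) a' b' := by
      rintro m a b ⟨hab, hKinv, hXm, hXlm, hXrm⟩
      obtain ⟨f, hf0, hf1, hfmono, hfimg⟩ := exists_affine a b hab
      have hfuniv : f '' Set.Icc 0 1 = Set.Icc a b := by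
        rw [hfimg 0 1 h01, hf0, hf1]
      have hfmem : ∀ t, f t ∈ Set.Icc a b := by
        intro t
        rw [← hfuniv]
        exact ⟨t, ⟨unitInterval.nonneg', unitInterval.le_one'⟩, rfl⟩
      have hgT : ∀ t, γ (f t) ∈ T m := fun t i hi => hKinv (f t) (hfmem t) i hi
      have hgc : Continuous (fun t => Φ m (γ (f t))) :=
        (hA m).comp_continuous (γ.continuous.comp f.continuous) hgT
      set G : C(unitInterval, Z) := ⟨fun t => Φ m (γ (f t)), hgc⟩ with hG
      have hGrange : Set.range G = (fun s => Φ m (γ s)) '' Set.Icc a b := by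
        rw [← hfuniv, ← Set.image_univ, ← icc_zero_one_eq_univ]
        ext z
        simp only [hG, ContinuousMap.coe_mk, Set.mem_image]
        constructor
        · rintro ⟨t, ht, rfl⟩; exact ⟨f t, ⟨t, ht, rfl⟩, rfl⟩
        · rintro ⟨s, ⟨t, ht, rfl⟩, rfl⟩; exact ⟨t, ht, rfl⟩
      obtain ⟨t₁, t₂, ht, hKim, hYim, hYl, hYr⟩ :=
        hstr (j + m) G (hGrange ▸ hXm) (hGrange ▸ hXlm) (hGrange ▸ hXrm)
      refine ⟨f t₁, f t₂, hf0 ▸ hfmono unitInterval.nonneg',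
        hf1 ▸ hfmono unitInterval.le_one', ?_⟩
      have hsub : Set.Icc (f t₁) (f t₂) ⊆ Set.Icc a b := by
        intro s hsmem
        exact ⟨le_trans (hf0 ▸ hfmono unitInterval.nonneg') hsmem.1,
          le_trans hsmem.2 (hf1 ▸ hfmono unitInterval.le_one')⟩
      have hkey : Set.Icc (f t₁) (f t₂) = f '' Set.Icc t₁ t₂ := (hfimg t₁ t₂ ht).symm
      have himg2 : (fun s => Φ (m + 1) (γ s)) '' Set.Icc (f t₁) (f t₂) =
          ψ (j + m) '' (G '' Set.Icc t₁ t₂) := by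
        rw [hkey, ← Set.image_comp, ← Set.image_comp]
        rfl
      have hcast : j + ((m : ℕ) + 1 : ℕ) = (j + (m : ℕ)) + 1 := by push_cast; ring
      refine ⟨hfmono ht, ?_, ?_, ?_, ?_⟩
      · intro s hsmem i hi
        rcases Nat.lt_succ_iff_lt_or_eq.mp hi with h | h
        · exact hKinv s (hsub hsmem) i h
        · subst h
          rw [hkey] at hsmem
          obtain ⟨t, htmem, rfl⟩ := hsmem
          exact hKim ⟨t, htmem, rfl⟩
      · rw [himg2, hcast]; exact hYim
      · rw [himg2, hcast]; exact hYl
      · rw [himg2, hcast]; exact hYr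
    obtain ⟨A, B, hQ, hAmono, hBanti⟩ := nat_rec_chain Inv 0 1 base step
    have hAm : Monotone A := monotone_nat_of_le_succ hAmono
    have hBm : Antitone B := antitone_nat_of_succ_le hBanti
    have hAB : ∀ m, (A m : ℝ) ≤ (B m : ℝ) := fun m => (hQ m).1
    have hbdd : BddAbove (Set.range fun m => (A m : ℝ)) := by
      refine ⟨(B 0 : ℝ), ?_⟩
      rintro x ⟨m, rfl⟩
      calc (A m : ℝ) ≤ B m := hAB m
        _ ≤ B 0 := hBm (Nat.zero_le m)
    set x : ℝ := ⨆ m, (A m : ℝ) with hx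
    have hAx : ∀ m, (A m : ℝ) ≤ x := fun m => le_ciSup hbdd m
    have hxB : ∀ m, x ≤ (B m : ℝ) := by
      intro m
      apply ciSup_le
      intro k
      rcases le_total k m with h | h
      · calc (A k : ℝ) ≤ A m := hAm h
          _ ≤ B m := hAB m
      · calc (A k : ℝ) ≤ B k := hAB k
          _ ≤ B m := hBm h
    have hxmem : x ∈ unitInterval := by
      constructor
      · exact le_trans (A 0).2.1 (hAx 0)
      · exact le_trans (hxB 0) (B 0).2.2
    set s : unitInterval := ⟨x, hxmem⟩ with hsdef
    have hsmem : ∀ m, s ∈ Set.Icc (A m) (B m) := fun m => ⟨hAx m, hxB m⟩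
    refine ⟨γ s, ⟨s, rfl⟩, ?_⟩
    intro i
    exact (hQ (i + 1)).2.1 s (hsmem (i + 1)) i (by omega)
  · -- the forward orbit
    intro w hw
    refine ⟨fun i => Φ (i - j).toNat w, ?_, ?_⟩
    · show Φ (j - j).toNat w = w
      rw [sub_self, Int.toNat_zero]
      exact hΦ0 w
    · intro i hij
      have hcast : ((i - j).toNat : ℤ) = i - j := Int.toNat_of_nonneg (by omega)
      have hji : j + ((i - j).toNat : ℤ) = i := by omega
      constructor
      · have := hw (i - j).toNat
        rw [hji] at this
        exact hKD i this
      · have hsucc : (i + 1 - j).toNat = (i - j).toNat + 1 := by omega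
        show ψ i (Φ (i - j).toNat w) = Φ (i + 1 - j).toNat w
        rw [hsucc, hΦs, hji]
end
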